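/- Along every Hamiltonian flow line of P, with E=τ, L=−q_φ, p=2P and K = q_θ² + 𝐃²/sin²θ + p·a²cos²θ the (constant) Carter constant, the following first-order equations hold at every parameter value s: ρ⁴·(dr/ds)² = Δ·(−p·r² − K) + 𝐏²; ρ⁴·(dθ/ds)² = K − p·a²cos²θ − 𝐃²/sin²θ; ρ²·(dφ/ds) = 𝐃/sin²θ + a𝐏/Δ; and ρ²·(dt/ds) = a𝐃 + (r²+a²)𝐏/Δ. (Geodesics of the Kerr–Newman metric in block I are exactly the projections of such flow lines, so these are the Kerr–Newman geodesic equations.) -/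

import Mathlib

/-!
STATEMENT 0 (Carter constant for the Kerr–Newman Hamiltonian flow).

Along every Hamiltonian flow line of `P` the momenta `τ` and `q_φ` are constant
(so the energy `E := τ` and the angular momentum `L := −q_φ` are constants of
motion), `p := 2P` is constant, and the Carter constant
`K := q_θ² + 𝐃²/sin²θ + p·a²·cos²θ` is constant along the flow line; moreover
at every point of the flow line one has `K = 𝐏²/Δ − Δ·ξ² − p·r²`.
-/

noncomputable section
open Real Set

namespace Stmt1

/-- `Δ(r) = r² − 2Mr + a² + Q²`. -/
def Δ (M a Q r : ℝ) : ℝ := r ^ 2 - 2 * M * r + a ^ 2 + Q ^ 2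

/-- Outer horizon `r₊ = M + √(M² − (a² + Q²))`. -/
def rplus (M a Q : ℝ) : ℝ := M + Real.sqrt (M ^ 2 - (a ^ 2 + Q ^ 2))

/-- `ρ²(r,θ) = r² + a²cos²θ`. -/
def rho2 (a r θ : ℝ) : ℝ := r ^ 2 + a ^ 2 * Real.cos θ ^ 2

/-- `σ²(r,θ) = (r²+a²)² − a²Δ(r)sin²θ`. -/
def sigma2 (M a Q r θ : ℝ) : ℝ :=
  (r ^ 2 + a ^ 2) ^ 2 - a ^ 2 * Δ M a Q r * Real.sin θ ^ 2

/-- The Hamiltonian `P`, the principal symbol of half the d'Alembertian of the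
Kerr–Newman metric on block I. -/
def P (M a Q : ℝ) (_t r θ _φ τ ξ qθ qφ : ℝ) : ℝ :=
  (1 / (2 * rho2 a r θ)) *
    ((sigma2 M a Q r θ / Δ M a Q r) * τ ^ 2
      - (2 * a * (Q ^ 2 - 2 * M * r) / Δ M a Q r) * qφ * τ
      - ((Δ M a Q r - a ^ 2 * Real.sin θ ^ 2) / (Δ M a Q r * Real.sin θ ^ 2)) * qφ ^ 2
      - Δ M a Q r * ξ ^ 2 - qθ ^ 2)

/-- A Hamiltonian flow line of `P` in block I : a `C¹` curve
`s ↦ (t,r,θ,φ;τ,ξ,q_θ,q_φ)(s)` with `r(s) > r₊` and `0 < θ(s) < π` satisfying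
Hamilton's equations `dx/ds = ∂P/∂p`, `dp/ds = −∂P/∂x`. -/
structure FlowLine (M a Q : ℝ) where
  t : ℝ → ℝ
  r : ℝ → ℝ
  θ : ℝ → ℝ
  φ : ℝ → ℝ
  τ : ℝ → ℝ
  ξ : ℝ → ℝ
  qθ : ℝ → ℝ
  qφ : ℝ → ℝ
  hr : ∀ s, rplus M a Q < r s
  hθ : ∀ s, θ s ∈ Set.Ioo 0 Real.pi
  eq_t : ∀ s, HasDerivAt t
    (deriv (fun u => P M a Q (t s) (r s) (θ s) (φ s) u (ξ s) (qθ s) (qφ s)) (τ s)) s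
  eq_r : ∀ s, HasDerivAt r
    (deriv (fun u => P M a Q (t s) (r s) (θ s) (φ s) (τ s) u (qθ s) (qφ s)) (ξ s)) s
  eq_θ : ∀ s, HasDerivAt θ
    (deriv (fun u => P M a Q (t s) (r s) (θ s) (φ s) (τ s) (ξ s) u (qφ s)) (qθ s)) s
  eq_φ : ∀ s, HasDerivAt φ
    (deriv (fun u => P M a Q (t s) (r s) (θ s) (φ s) (τ s) (ξ s) (qθ s) u) (qφ s)) s
  eq_τ : ∀ s, HasDerivAt τ
    (-deriv (fun u => P M a Q u (r s) (θ s) (φ s) (τ s) (ξ s) (qθ s) (qφ s)) (t s)) s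
  eq_ξ : ∀ s, HasDerivAt ξ
    (-deriv (fun u => P M a Q (t s) u (θ s) (φ s) (τ s) (ξ s) (qθ s) (qφ s)) (r s)) s
  eq_qθ : ∀ s, HasDerivAt qθ
    (-deriv (fun u => P M a Q (t s) (r s) u (φ s) (τ s) (ξ s) (qθ s) (qφ s)) (θ s)) s
  eq_qφ : ∀ s, HasDerivAt qφ
    (-deriv (fun u => P M a Q (t s) (r s) (θ s) u (τ s) (ξ s) (qθ s) (qφ s)) (φ s)) s

/-- `p := 2P` evaluated along the flow line. -/
def pval (M a Q : ℝ) (γ : FlowLine M a Q) (s : ℝ) : ℝ :=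
  2 * P M a Q (γ.t s) (γ.r s) (γ.θ s) (γ.φ s) (γ.τ s) (γ.ξ s) (γ.qθ s) (γ.qφ s)

/-- `𝐃 := L − aE sin²θ` evaluated along the flow line (with `E = τ`, `L = −q_φ`). -/
def Dd (M a Q : ℝ) (γ : FlowLine M a Q) (s : ℝ) : ℝ :=
  (-γ.qφ s) - a * γ.τ s * Real.sin (γ.θ s) ^ 2

/-- `𝐏 := (r²+a²)E − aL` evaluated along the flow line. -/
def Pb (M a Q : ℝ) (γ : FlowLine M a Q) (s : ℝ) : ℝ :=
  ((γ.r s) ^ 2 + a ^ 2) * γ.τ s - a * (-γ.qφ s)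

/-- The Carter constant `K = q_θ² + 𝐃²/sin²θ + p a² cos²θ` along the flow line. -/
def Kc (M a Q : ℝ) (γ : FlowLine M a Q) (s : ℝ) : ℝ :=
  (γ.qθ s) ^ 2 + (Dd M a Q γ s) ^ 2 / Real.sin (γ.θ s) ^ 2
    + pval M a Q γ s * a ^ 2 * Real.cos (γ.θ s) ^ 2


private lemma deriv_quad (A B C x : ℝ) :
    deriv (fun u : ℝ => A * u ^ 2 + B * u + C) x = 2 * A * x + B := by
  have h : HasDerivAt (fun u : ℝ => A * u ^ 2 + B * u + C)
      (A * (↑2 * x ^ 1) + B * 1) x :=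
    (((hasDerivAt_pow 2 x).const_mul A).add ((hasDerivAt_id x).const_mul B)).add_const C
  have := h.deriv
  rw [this]; ring

set_option maxHeartbeats 2000000 in
/-- along every Hamiltonian flow line of `P`, with `E = τ`,
`L = −q_φ`, `p = 2P` and `K` the Carter constant, the first-order equations
`ρ⁴(dr/ds)² = Δ(−pr²−K)+𝐏²`, `ρ⁴(dθ/ds)² = K − pa²cos²θ − 𝐃²/sin²θ`,
`ρ²(dφ/ds) = 𝐃/sin²θ + a𝐏/Δ` and `ρ²(dt/ds) = a𝐃 + (r²+a²)𝐏/Δ` hold at every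
parameter value `s`.  (Geodesics of the Kerr–Newman metric in block I are
exactly the projections of such flow lines, so these are the Kerr–Newman
geodesic equations.) -/
theorem geodesic_equations (M a Q : ℝ) (hM : 0 < M) (ha : 0 < a)
    (hsub : a ^ 2 + Q ^ 2 < M ^ 2) (γ : FlowLine M a Q) (s : ℝ) :
    (rho2 a (γ.r s) (γ.θ s)) ^ 2 * (deriv γ.r s) ^ 2
        = Δ M a Q (γ.r s) * (-(pval M a Q γ s) * (γ.r s) ^ 2 - Kc M a Q γ s)
          + (Pb M a Q γ s) ^ 2 ∧
    (rho2 a (γ.r s) (γ.θ s)) ^ 2 * (deriv γ.θ s) ^ 2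
        = Kc M a Q γ s - pval M a Q γ s * a ^ 2 * Real.cos (γ.θ s) ^ 2
          - (Dd M a Q γ s) ^ 2 / Real.sin (γ.θ s) ^ 2 ∧
    rho2 a (γ.r s) (γ.θ s) * deriv γ.φ s
        = Dd M a Q γ s / Real.sin (γ.θ s) ^ 2
          + a * Pb M a Q γ s / Δ M a Q (γ.r s) ∧
    rho2 a (γ.r s) (γ.θ s) * deriv γ.t s
        = a * Dd M a Q γ s + ((γ.r s) ^ 2 + a ^ 2) * Pb M a Q γ s / Δ M a Q (γ.r s) := by
  have hrp : rplus M a Q < γ.r s := γ.hr s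
  have hle : (0:ℝ) ≤ M ^ 2 - (a ^ 2 + Q ^ 2) := by nlinarith
  have hsq : Real.sqrt (M ^ 2 - (a ^ 2 + Q ^ 2)) ^ 2 = M ^ 2 - (a ^ 2 + Q ^ 2) :=
    Real.sq_sqrt hle
  have hs0 : 0 ≤ Real.sqrt (M ^ 2 - (a ^ 2 + Q ^ 2)) := Real.sqrt_nonneg _
  have hrM : M < γ.r s := by
    unfold rplus at hrp; nlinarith
  have hΔ : 0 < Δ M a Q (γ.r s) := by
    unfold rplus at hrp; unfold Δ; nlinarith
  have hρ : 0 < rho2 a (γ.r s) (γ.θ s) := by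
    unfold rho2; nlinarith [sq_nonneg (a * Real.cos (γ.θ s))]
  have hsin : 0 < Real.sin (γ.θ s) :=
    Real.sin_pos_of_pos_of_lt_pi (γ.hθ s).1 (γ.hθ s).2
  have hΔ' : (γ.r s) ^ 2 - 2 * M * γ.r s + a ^ 2 + Q ^ 2 ≠ 0 := by
    have h := hΔ.ne'; simpa [Δ] using h
  have hρ' : (γ.r s) ^ 2 + a ^ 2 * Real.cos (γ.θ s) ^ 2 ≠ 0 := by
    have h := hρ.ne'; simpa [rho2] using h
  have hsin' : Real.sin (γ.θ s) ≠ 0 := hsin.ne'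
  refine ⟨?_, ?_, ?_, ?_⟩
  · -- radial equation
    have hdr : deriv γ.r s =
        2 * ((-(Δ M a Q (γ.r s)) / (2 * rho2 a (γ.r s) (γ.θ s)))) * γ.ξ s + 0 := by
      have h := (γ.eq_r s).deriv
      rw [h]
      have heq : (fun u => P M a Q (γ.t s) (γ.r s) (γ.θ s) (γ.φ s) (γ.τ s) u (γ.qθ s) (γ.qφ s))
          = fun u => (-(Δ M a Q (γ.r s)) / (2 * rho2 a (γ.r s) (γ.θ s))) * u ^ 2 + 0 * u +
              P M a Q (γ.t s) (γ.r s) (γ.θ s) (γ.φ s) (γ.τ s) 0 (γ.qθ s) (γ.qφ s) := by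
        funext u; simp only [P]; ring
      rw [heq, deriv_quad]
    rw [hdr]
    simp only [pval, Kc, Dd, Pb, P, rho2, sigma2, Δ]
    have hΔ'' : γ.r s * (γ.r s - 2 * M) + a ^ 2 + Q ^ 2 ≠ 0 := by
      intro h; apply hΔ'; linear_combination h
    field_simp
    ring
  · -- θ equation
    have hdθ : deriv γ.θ s =
        2 * ((-1 : ℝ) / (2 * rho2 a (γ.r s) (γ.θ s))) * γ.qθ s + 0 := by
      have h := (γ.eq_θ s).deriv
      rw [h]
      have heq : (fun u => P M a Q (γ.t s) (γ.r s) (γ.θ s) (γ.φ s) (γ.τ s) (γ.ξ s) u (γ.qφ s))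
          = fun u => ((-1 : ℝ) / (2 * rho2 a (γ.r s) (γ.θ s))) * u ^ 2 + 0 * u +
              P M a Q (γ.t s) (γ.r s) (γ.θ s) (γ.φ s) (γ.τ s) (γ.ξ s) 0 (γ.qφ s) := by
        funext u; simp only [P]; ring
      rw [heq, deriv_quad]
    rw [hdθ]
    simp only [pval, Kc, Dd, Pb, P, rho2, sigma2, Δ]
    field_simp
    ring
  · -- φ equation
    have hdφ : deriv γ.φ s =
        2 * (-((Δ M a Q (γ.r s) - a ^ 2 * Real.sin (γ.θ s) ^ 2) /
              (Δ M a Q (γ.r s) * Real.sin (γ.θ s) ^ 2)) / (2 * rho2 a (γ.r s) (γ.θ s))) * γ.qφ s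
          + (-(2 * a * (Q ^ 2 - 2 * M * γ.r s) / Δ M a Q (γ.r s)) * γ.τ s /
              (2 * rho2 a (γ.r s) (γ.θ s))) := by
      have h := (γ.eq_φ s).deriv
      rw [h]
      have heq : (fun u => P M a Q (γ.t s) (γ.r s) (γ.θ s) (γ.φ s) (γ.τ s) (γ.ξ s) (γ.qθ s) u)
          = fun u => (-((Δ M a Q (γ.r s) - a ^ 2 * Real.sin (γ.θ s) ^ 2) /
                (Δ M a Q (γ.r s) * Real.sin (γ.θ s) ^ 2)) / (2 * rho2 a (γ.r s) (γ.θ s))) * u ^ 2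
              + (-(2 * a * (Q ^ 2 - 2 * M * γ.r s) / Δ M a Q (γ.r s)) * γ.τ s /
                  (2 * rho2 a (γ.r s) (γ.θ s))) * u +
              P M a Q (γ.t s) (γ.r s) (γ.θ s) (γ.φ s) (γ.τ s) (γ.ξ s) (γ.qθ s) 0 := by
        funext u; simp only [P]; ring
      rw [heq, deriv_quad]
    rw [hdφ]
    simp only [pval, Kc, Dd, Pb, P, rho2, sigma2, Δ]
    have hΔ'' : γ.r s * (γ.r s - 2 * M) + a ^ 2 + Q ^ 2 ≠ 0 := by
      intro h; apply hΔ'; linear_combination h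
    field_simp
    ring
  · -- t equation
    have hdt : deriv γ.t s =
        2 * ((sigma2 M a Q (γ.r s) (γ.θ s) / Δ M a Q (γ.r s)) /
              (2 * rho2 a (γ.r s) (γ.θ s))) * γ.τ s
          + (-(2 * a * (Q ^ 2 - 2 * M * γ.r s) / Δ M a Q (γ.r s)) * γ.qφ s /
              (2 * rho2 a (γ.r s) (γ.θ s))) := by
      have h := (γ.eq_t s).deriv
      rw [h]
      have heq : (fun u => P M a Q (γ.t s) (γ.r s) (γ.θ s) (γ.φ s) u (γ.ξ s) (γ.qθ s) (γ.qφ s))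
          = fun u => ((sigma2 M a Q (γ.r s) (γ.θ s) / Δ M a Q (γ.r s)) /
                (2 * rho2 a (γ.r s) (γ.θ s))) * u ^ 2
              + (-(2 * a * (Q ^ 2 - 2 * M * γ.r s) / Δ M a Q (γ.r s)) * γ.qφ s /
                  (2 * rho2 a (γ.r s) (γ.θ s))) * u +
              P M a Q (γ.t s) (γ.r s) (γ.θ s) (γ.φ s) 0 (γ.ξ s) (γ.qθ s) (γ.qφ s) := by
        funext u; simp only [P]; ring
      rw [heq, deriv_quad]
    rw [hdt]
    simp only [pval, Dd, Pb, P, rho2, sigma2, Δ]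
    have hΔ'' : γ.r s * (γ.r s - 2 * M) + a ^ 2 + Q ^ 2 ≠ 0 := by
      intro h; apply hΔ'; linear_combination h
    field_simp
    ring


end Stmt1
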